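/- Suppose the sequence (x_k) from the inductive midrange procedure on two points y_min < y_max satisfies x_m ∈ (y_min, x*) and x_{m+1} ∈ (x*, y_max) for some m, where x* = (y_min+y_max)/2. Then x_{m+2} = (m/(m+2)) x_m + (2/(m+2)) x*, and consequently x_m < x_{m+2} < x*. -/

import Mathlib

/-- One double-step of the inductive midrange procedure on two points: if
`x m ∈ (y_min, x*)` and `x (m+1) ∈ (x*, y_max)` where `x* = (y_min + y_max)/2`, then
`x (m+2) = (m/(m+2)) x m + (2/(m+2)) x*` and hence `x m < x (m+2) < x*`. -/
theorem inductive_midrange_double_step (ymin ymax : ℝ) (hy : ymin < ymax)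
    (x : ℕ → ℝ) (m : ℕ) (hm : 1 ≤ m)
    (hxm : x m ∈ Set.Ioo ymin ((ymin + ymax) / 2))
    (hxm1 : x (m + 1) ∈ Set.Ioo ((ymin + ymax) / 2) ymax)
    (hstep1 : x (m + 1) = ((m : ℝ) / ((m : ℝ) + 1)) * x m + (1 / ((m : ℝ) + 1)) * ymax)
    (hstep2 : x (m + 2) =
      (((m : ℝ) + 1) / ((m : ℝ) + 2)) * x (m + 1) + (1 / ((m : ℝ) + 2)) * ymin) :
    x (m + 2) = ((m : ℝ) / ((m : ℝ) + 2)) * x m +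
        (2 / ((m : ℝ) + 2)) * ((ymin + ymax) / 2) ∧
      x m < x (m + 2) ∧ x (m + 2) < (ymin + ymax) / 2 := by
  have hm0 : (0:ℝ) < (m:ℝ) := by exact_mod_cast hm
  have h1 : ((m:ℝ) + 1) ≠ 0 := by positivity
  have h2 : ((m:ℝ) + 2) ≠ 0 := by positivity
  have h2' : (0:ℝ) < (m:ℝ) + 2 := by positivity
  obtain ⟨hl, hr⟩ := hxm
  have heq : x (m + 2) = ((m : ℝ) / ((m : ℝ) + 2)) * x m +
      (2 / ((m : ℝ) + 2)) * ((ymin + ymax) / 2) := by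
    rw [hstep2, hstep1]; field_simp; ring
  refine ⟨heq, ?_, ?_⟩
  · rw [heq, div_mul_eq_mul_div, div_mul_eq_mul_div, ← add_div, lt_div_iff₀ h2']
    nlinarith
  · rw [heq, div_mul_eq_mul_div, div_mul_eq_mul_div, ← add_div, div_lt_iff₀ h2']
    nlinarith
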